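/- (Jaccard distance triangle inequality) For finite nonempty sets A, B, C, the Jaccard distance d(A,B) = 1 − |A ∩ B|/|A ∪ B| satisfies the triangle inequality d(A,C) ≤ d(A,B) + d(B,C). -/

import Mathlib

/-- The Jaccard distance `d(A,B) = 1 − |A ∩ B|/|A ∪ B|` on finite nonempty sets
satisfies the triangle inequality `d(A,C) ≤ d(A,B) + d(B,C)`. -/
theorem jaccard_distance_triangle {α : Type*} [DecidableEq α]
    (d : Finset α → Finset α → ℝ)
    (hd : ∀ X Y : Finset α,
      d X Y = 1 - ((X ∩ Y).card : ℝ) / ((X ∪ Y).card : ℝ))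
    (A B C : Finset α) (hA : A.Nonempty) (hB : B.Nonempty) (hC : C.Nonempty) :
    d A C ≤ d A B + d B C := by
  rw [hd, hd, hd]
  set n : ℕ := (A ∪ B ∪ C).card with hn
  -- key combinatorial inequality
  have key : (A ∩ B).card + (B ∩ C).card + n ≤ (A ∪ B).card + (B ∪ C).card + (A ∩ C).card := by
    have h1 : (A ∩ B).card + (B ∩ C).card ≤ B.card + (A ∩ C).card := by
      have e := Finset.card_union_add_card_inter (A ∩ B) (B ∩ C)
      have hu : (A ∩ B) ∪ (B ∩ C) ⊆ B := by
        intro x hx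
        rcases Finset.mem_union.1 hx with h | h
        · exact (Finset.mem_inter.1 h).2
        · exact (Finset.mem_inter.1 h).1
      have hi : (A ∩ B) ∩ (B ∩ C) ⊆ A ∩ C := by
        intro x hx
        simp only [Finset.mem_inter] at hx ⊢
        exact ⟨hx.1.1, hx.2.2⟩
      calc (A ∩ B).card + (B ∩ C).card
          = ((A ∩ B) ∪ (B ∩ C)).card + ((A ∩ B) ∩ (B ∩ C)).card := e.symm
        _ ≤ B.card + (A ∩ C).card :=
            Nat.add_le_add (Finset.card_le_card hu) (Finset.card_le_card hi)
    have h2 : n + B.card ≤ (A ∪ B).card + (B ∪ C).card := by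
      have e := Finset.card_union_add_card_inter (A ∪ B) (B ∪ C)
      have hu : (A ∪ B) ∪ (B ∪ C) = A ∪ B ∪ C := by
        rw [Finset.union_assoc, ← Finset.union_assoc B B C, Finset.union_self, Finset.union_assoc]
      have hi : B ⊆ (A ∪ B) ∩ (B ∪ C) := by
        intro x hx
        simp only [Finset.mem_inter, Finset.mem_union]
        exact ⟨Or.inr hx, Or.inl hx⟩
      calc n + B.card ≤ ((A ∪ B) ∪ (B ∪ C)).card + ((A ∪ B) ∩ (B ∪ C)).card := by
            rw [hu]; exact Nat.add_le_add le_rfl (Finset.card_le_card hi)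
        _ = (A ∪ B).card + (B ∪ C).card := e
    omega
  -- real versions
  have hnpos : (0:ℝ) < (n:ℝ) := by
    have : 0 < n := Finset.card_pos.2 (hA.mono (by intro x hx; simp [Finset.mem_union, hx]))
    exact_mod_cast this
  have hABpos : (0:ℝ) < ((A ∪ B).card : ℝ) := by
    have : 0 < (A ∪ B).card := Finset.card_pos.2 (hA.mono Finset.subset_union_left)
    exact_mod_cast this
  have hBCpos : (0:ℝ) < ((B ∪ C).card : ℝ) := by
    have : 0 < (B ∪ C).card := Finset.card_pos.2 (hB.mono Finset.subset_union_left)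
    exact_mod_cast this
  have hACpos : (0:ℝ) < ((A ∪ C).card : ℝ) := by
    have : 0 < (A ∪ C).card := Finset.card_pos.2 (hA.mono Finset.subset_union_left)
    exact_mod_cast this
  -- generic lemma: k/m ≤ (k + (n - m))/n when k ≤ m ≤ n
  have step : ∀ X Y : Finset α, X ∪ Y ⊆ A ∪ B ∪ C → 0 < ((X ∪ Y).card : ℝ) →
      ((X ∩ Y).card : ℝ) / ((X ∪ Y).card : ℝ) ≤
        (((X ∩ Y).card : ℝ) + ((n : ℝ) - ((X ∪ Y).card : ℝ))) / (n : ℝ) := by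
    intro X Y hsub hpos
    have hk : ((X ∩ Y).card : ℝ) ≤ ((X ∪ Y).card : ℝ) := by
      exact_mod_cast Finset.card_le_card (Finset.inter_subset_union)
    have hm : (((X ∪ Y).card : ℝ)) ≤ (n : ℝ) := by
      exact_mod_cast Finset.card_le_card hsub
    have hk0 : (0:ℝ) ≤ ((X ∩ Y).card : ℝ) := by positivity
    rw [div_le_div_iff₀ hpos hnpos]
    nlinarith
  have hAB := step A B (by intro x hx; simp only [Finset.mem_union] at hx ⊢; tauto) hABpos
  have hBC := step B C (by intro x hx; simp only [Finset.mem_union] at hx ⊢; tauto) hBCpos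
  have hAC : ((A ∩ C).card : ℝ) / (n : ℝ) ≤ ((A ∩ C).card : ℝ) / ((A ∪ C).card : ℝ) := by
    apply div_le_div_of_nonneg_left (by positivity) hACpos
    exact_mod_cast Finset.card_le_card (by intro x hx; simp only [Finset.mem_union] at hx ⊢; tauto)
  have keyR : ((A ∩ B).card : ℝ) + ((B ∩ C).card : ℝ) + (n:ℝ) ≤
      ((A ∪ B).card : ℝ) + ((B ∪ C).card : ℝ) + ((A ∩ C).card : ℝ) := by exact_mod_cast key
  have hsum : (((A ∩ B).card : ℝ) + ((n:ℝ) - ((A ∪ B).card : ℝ))) / (n:ℝ)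
      + (((B ∩ C).card : ℝ) + ((n:ℝ) - ((B ∪ C).card : ℝ))) / (n:ℝ)
      ≤ 1 + ((A ∩ C).card : ℝ) / (n:ℝ) := by
    have h1 : (1:ℝ) + ((A ∩ C).card : ℝ) / (n:ℝ) = ((n:ℝ) + ((A ∩ C).card : ℝ)) / (n:ℝ) := by
      field_simp
    rw [← add_div, h1, div_le_div_iff₀ hnpos hnpos]
    nlinarith [keyR]
  linarith
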